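/- Assume K has characteristic 0. (i) For every n with 2 ≤ n ≤ 5, the only K-linear combination f of the degree-n commutative nonassociative monomials in K(x) satisfying ε(f) = 0 and ∂_x(f) = 0 is f = 0 (there is no homogeneous Peirce-evanescent identity of type [n] for n ≤ 5). (ii) For every n ≥ 6, the K-vector space of K-linear combinations f of degree-n monomials satisfying ε(f) = 0 and ∂_x(f) = 0 has dimension at least W_n − n + 2, where W_n is the number of commutative nonassociative monomials of degree n in one variable (the Wedderburn–Etherington number). -/

import Mathlib

namespace Evanescent

universe u v

variable {T : Type u}

/-- The commutativity relation on the free magma on `T`. -/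
inductive CommRel (T : Type u) : FreeMagma T → FreeMagma T → Prop
  | comm (a b : FreeMagma T) : CommRel T (a * b) (b * a)
  | mul_left {a b : FreeMagma T} (c : FreeMagma T) :
      CommRel T a b → CommRel T (a * c) (b * c)
  | mul_right (c : FreeMagma T) {a b : FreeMagma T} :
      CommRel T a b → CommRel T (c * a) (c * b)

/-- The free commutative magma on `T`: the set of commutative nonassociative
monomials (words) in the variables `T`. -/
def FreeCommMagma (T : Type u) : Type u := Quot (CommRel T)

namespace FreeCommMagma

instance : Mul (FreeCommMagma T) :=
  ⟨Quot.map₂ (· * ·) (fun a _ _ h => CommRel.mul_right a h)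
    (fun _ _ b h => CommRel.mul_left b h)⟩

/-- The class of a nonassociative word in the free commutative magma. -/
def mk (w : FreeMagma T) : FreeCommMagma T := Quot.mk (CommRel T) w

/-- The generator of the free commutative magma corresponding to a variable. -/
def of (t : T) : FreeCommMagma T := mk (FreeMagma.of t)

@[simp] lemma mk_mul (a b : FreeMagma T) : mk a * mk b = mk (a * b) := rfl

protected lemma mul_comm (a b : FreeCommMagma T) : a * b = b * a := by
  induction a using Quot.ind
  induction b using Quot.ind
  exact Quot.sound (CommRel.comm _ _)

instance : CommMagma (FreeCommMagma T) := ⟨FreeCommMagma.mul_comm⟩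

end FreeCommMagma

section Peirce

variable (R : Type v) [Semiring R] [DecidableEq T]

/-- The Peirce polynomial of a (noncommutative) nonassociative word, with
coefficients in `R`. -/
noncomputable def peirceAux (i : T) : FreeMagma T → Polynomial R
  | .of j => if j = i then 1 else 0
  | .mul u v => Polynomial.X * (peirceAux i u + peirceAux i v)

@[simp] lemma peirceAux_mul (i : T) (u v : FreeMagma T) :
    peirceAux R i (u * v) = Polynomial.X * (peirceAux R i u + peirceAux R i v) := rfl

@[simp] lemma peirceAux_of (i j : T) :
    peirceAux R i (FreeMagma.of j) = if j = i then 1 else 0 := rfl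

/-- The number of occurrences of the variable `i` in a nonassociative word. -/
def countAux (i : T) : FreeMagma T → ℕ
  | .of j => if j = i then 1 else 0
  | .mul u v => countAux i u + countAux i v

@[simp] lemma countAux_mul (i : T) (u v : FreeMagma T) :
    countAux i (u * v) = countAux i u + countAux i v := rfl

lemma peirceAux_respects (i : T) {a b : FreeMagma T} (h : CommRel T a b) :
    peirceAux R i a = peirceAux R i b := by
  induction h with
  | comm a b => simp [add_comm]
  | mul_left c h ih => simp [ih]
  | mul_right c h ih => simp [ih]

lemma countAux_respects (i : T) {a b : FreeMagma T} (h : CommRel T a b) :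
    countAux i a = countAux i b := by
  induction h with
  | comm a b => simp [Nat.add_comm]
  | mul_left c h ih => simp [ih]
  | mul_right c h ih => simp [ih]

/-- The Peirce polynomial `∂ᵢ(w)` of a commutative nonassociative monomial `w`,
determined by `∂ᵢ(tᵢ) = 1`, `∂ᵢ(tⱼ) = 0` for `j ≠ i`, and
`∂ᵢ(u·v) = X·(∂ᵢ(u) + ∂ᵢ(v))`. -/
noncomputable def FreeCommMagma.peirce (i : T) : FreeCommMagma T → Polynomial R :=
  Quot.lift (peirceAux R i) fun _ _ h => peirceAux_respects R i h

/-- The number of occurrences (degree) of the variable `i` in a commutative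
nonassociative monomial. -/
def FreeCommMagma.count (i : T) : FreeCommMagma T → ℕ :=
  Quot.lift (countAux i) fun _ _ h => countAux_respects i h

end Peirce

/-- Principal powers of an element of a magma: `ppow a n = a^(n+1)`,
i.e. `ppow a 0 = a` and `ppow a (n+1) = a * (ppow a n)`. -/
def ppow {M : Type v} [Mul M] (a : M) : ℕ → M
  | 0 => a
  | n + 1 => a * ppow a n

/-- Iterated left multiplication: `lpow a r g = a^{{r}} g`, i.e. `lpow a 0 g = g` and
`lpow a (r+1) g = a * (lpow a r g)`. -/
def lpow {M : Type v} [Mul M] (a : M) : ℕ → M → M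
  | 0, g => g
  | r + 1, g => a * lpow a r g

section Algebra

variable (K : Type v) [Field K]

/-- A commutative nonassociative monomial, viewed as an element of the free
commutative nonassociative algebra `K(T)` (realized as the magma algebra of the
free commutative magma). -/
noncomputable def mono (w : FreeCommMagma T) : MonoidAlgebra K (FreeCommMagma T) :=
  MonoidAlgebra.single w 1

/-- The augmentation (sum of the coefficients) of an element of the free
commutative nonassociative algebra. -/
noncomputable def aug : MonoidAlgebra K (FreeCommMagma T) →ₗ[K] K :=
  Finsupp.lsum K (fun _ => LinearMap.id) ∘ₗ (MonoidAlgebra.coeffLinearEquiv K).toLinearMap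

/-- The Peirce polynomial `∂ᵢ : K(T) → K[X]`, the `K`-linear map determined on
monomials by `∂ᵢ(tᵢ) = 1`, `∂ᵢ(tⱼ) = 0` for `j ≠ i`, and `∂ᵢ(u·v) = X·(∂ᵢ(u) + ∂ᵢ(v))`. -/
noncomputable def Dp [DecidableEq T] (i : T) :
    MonoidAlgebra K (FreeCommMagma T) →ₗ[K] Polynomial K :=
  Finsupp.lsum K (fun w => LinearMap.toSpanSingleton K (Polynomial K)
    (FreeCommMagma.peirce K i w)) ∘ₗ (MonoidAlgebra.coeffLinearEquiv K).toLinearMap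

/-- The free commutative nonassociative algebra is commutative. -/
lemma fca_mul_comm (f g : MonoidAlgebra K (FreeCommMagma T)) : f * g = g * f := by
  rw [MonoidAlgebra.mul_def, MonoidAlgebra.mul_def, Finsupp.sum_comm]
  refine Finsupp.sum_congr fun a _ => Finsupp.sum_congr fun c _ => ?_
  rw [FreeCommMagma.mul_comm, mul_comm (f.coeff c) (g.coeff a)]

end Algebra

section Subst

variable (K : Type v) [Field K] {A : Type*} [Mul A]

/-- Evaluation of a nonassociative word under a substitution of the variables. -/
def evalAux (ρ : T → A) : FreeMagma T → A
  | .of t => ρ t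
  | .mul u v => evalAux ρ u * evalAux ρ v

@[simp] lemma evalAux_mul (ρ : T → A) (u v : FreeMagma T) :
    evalAux ρ (u * v) = evalAux ρ u * evalAux ρ v := rfl

/-- Evaluation of a commutative nonassociative monomial in a commutative magma
under a substitution of the variables. -/
def FreeCommMagma.eval (hA : ∀ a b : A, a * b = b * a) (ρ : T → A) :
    FreeCommMagma T → A :=
  Quot.lift (evalAux ρ) (by
    intro a b h
    induction h with
    | comm a b => exact hA _ _
    | mul_left c h ih => simp [ih]
    | mul_right c h ih => simp [ih])

/-- The substitution homomorphism `ρ̂ : K(T) → A` extending a substitution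
`ρ : T → A` of the variables, for `A` a commutative nonassociative `K`-algebra. -/
noncomputable def subst [AddCommMonoid A] [Module K A]
    (hA : ∀ a b : A, a * b = b * a) (ρ : T → A)
    (f : MonoidAlgebra K (FreeCommMagma T)) : A :=
  f.coeff.sum fun w c => c • FreeCommMagma.eval hA ρ w

end Subst

/-- The list of the leaves of a nonassociative word (a rooted binary tree with
leaves labeled by the variables), together with their heights. -/
def leaves : FreeMagma T → List (T × ℕ)
  | .of t => [(t, 0)]
  | .mul u v => (leaves u ++ leaves v).map fun p => (p.1, p.2 + 1)

end Evanescent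
namespace Evanescent

/-- The single variable `x` of `K(x)`, as a monomial. -/
def x1 : FreeCommMagma Unit := FreeCommMagma.of ()

/-- The subspace of homogeneous Peirce-evanescent identities of degree `n` in `K(x)`:
linear combinations of degree-`n` monomials with zero augmentation and zero Peirce
polynomial. -/
noncomputable def homEvan (K : Type*) [Field K] (n : ℕ) :
    Submodule K (MonoidAlgebra K (FreeCommMagma Unit)) :=
  (Submodule.span K (mono K '' {w : FreeCommMagma Unit | FreeCommMagma.count () w = n}))
    ⊓ LinearMap.ker (aug K) ⊓ LinearMap.ker (Dp K ())

/-- The Wedderburn–Etherington number: the number of commutative nonassociative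
monomials of degree `n` in one variable. -/
noncomputable def Wn (n : ℕ) : ℕ :=
  Nat.card {w : FreeCommMagma Unit // FreeCommMagma.count () w = n}

open Polynomial

section Aux

variable {K : Type*} [Field K]

lemma count_mk (w : FreeMagma Unit) :
    FreeCommMagma.count () (FreeCommMagma.mk w) = countAux () w := rfl

lemma peirce_mk (w : FreeMagma Unit) :
    FreeCommMagma.peirce K () (FreeCommMagma.mk w) = peirceAux K () w := rfl

@[simp] lemma count_x1 : FreeCommMagma.count () x1 = 1 := rfl

@[simp] lemma count_mul (a b : FreeCommMagma Unit) :
    FreeCommMagma.count () (a * b)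
      = FreeCommMagma.count () a + FreeCommMagma.count () b := by
  induction a using Quot.ind
  induction b using Quot.ind
  rfl

@[simp] lemma peirce_x1 : FreeCommMagma.peirce K () x1 = 1 := by
  show peirceAux K () (FreeMagma.of ()) = 1
  simp

@[simp] lemma peirce_mul (a b : FreeCommMagma Unit) :
    FreeCommMagma.peirce K () (a * b)
      = Polynomial.X * (FreeCommMagma.peirce K () a + FreeCommMagma.peirce K () b) := by
  induction a using Quot.ind
  induction b using Quot.ind
  rfl

@[simp] lemma aug_mono (w : FreeCommMagma Unit) : aug K (mono K w) = 1 := by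
  show (Finsupp.lsum K fun _ => (LinearMap.id : K →ₗ[K] K)) (MonoidAlgebra.single w (1:K)).coeff = 1
  rw [MonoidAlgebra.coeff_single]
  rw [Finsupp.lsum_single]; rfl

@[simp] lemma Dp_mono (w : FreeCommMagma Unit) :
    Dp K () (mono K w) = FreeCommMagma.peirce K () w := by
  show (Finsupp.lsum K fun w => LinearMap.toSpanSingleton K (Polynomial K)
      (FreeCommMagma.peirce K () w)) (MonoidAlgebra.single w (1:K)).coeff = _
  rw [MonoidAlgebra.coeff_single]
  rw [Finsupp.lsum_single, LinearMap.toSpanSingleton_apply, one_smul]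

lemma countAux_pos (w : FreeMagma Unit) : 1 ≤ countAux () w := by
  induction w with
  | ih1 t => simp [countAux]
  | ih2 u v ihu ihv => simp only [countAux_mul]; omega

end Aux

section Trees

variable {K : Type*} [Field K]

lemma peirceAux_eval_one (w : FreeMagma Unit) :
    Polynomial.eval (1 : K) (peirceAux K () w) = (countAux () w : K) := by
  induction w with
  | ih1 t => simp [countAux]
  | ih2 u v ihu ihv =>
    simp only [peirceAux_mul, countAux_mul, Polynomial.eval_mul, Polynomial.eval_add,
      Polynomial.eval_X, ihu, ihv]
    push_cast
    ring

lemma peirceAux_eval_half [CharZero K] (w : FreeMagma Unit) :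
    Polynomial.eval (2⁻¹ : K) (peirceAux K () w) = 1 := by
  induction w with
  | ih1 t => simp
  | ih2 u v ihu ihv =>
    simp only [peirceAux_mul, Polynomial.eval_mul, Polynomial.eval_add, Polynomial.eval_X,
      ihu, ihv]
    rw [show (1 : K) + 1 = 2 by norm_num, inv_mul_cancel₀ (two_ne_zero)]

lemma peirceAux_natDegree_lt (w : FreeMagma Unit) :
    (peirceAux K () w).natDegree < countAux () w := by
  induction w with
  | ih1 t =>
    have h0 : (peirceAux K () (FreeMagma.of t)).natDegree = 0 := by
      simp [Polynomial.natDegree_one]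
    have h1 : countAux () (FreeMagma.of t) = 1 := by simp [countAux]
    omega
  | ih2 u v ihu ihv =>
    have hb : (Polynomial.X * (peirceAux K () u + peirceAux K () v)).natDegree
        ≤ 1 + max (peirceAux K () u).natDegree (peirceAux K () v).natDegree := by
      refine le_trans Polynomial.natDegree_mul_le ?_
      have := Polynomial.natDegree_add_le (peirceAux K () u) (peirceAux K () v)
      simpa using this
    have hcu := countAux_pos u
    have hcv := countAux_pos v
    have hmax : max (peirceAux K () u).natDegree (peirceAux K () v).natDegree
        ≤ (peirceAux K () u).natDegree + (peirceAux K () v).natDegree :=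
      max_le (Nat.le_add_right _ _) (Nat.le_add_left _ _)
    simp only [peirceAux_mul, countAux_mul]
    omega

lemma peirce_eval_one (w : FreeCommMagma Unit) :
    Polynomial.eval (1 : K) (FreeCommMagma.peirce K () w) = (FreeCommMagma.count () w : K) := by
  induction w using Quot.ind
  exact peirceAux_eval_one _

lemma peirce_eval_half [CharZero K] (w : FreeCommMagma Unit) :
    Polynomial.eval (2⁻¹ : K) (FreeCommMagma.peirce K () w) = 1 := by
  induction w using Quot.ind
  exact peirceAux_eval_half _

lemma peirce_coeff_ge (w : FreeCommMagma Unit) {k : ℕ} (h : FreeCommMagma.count () w ≤ k) :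
    (FreeCommMagma.peirce K () w).coeff k = 0 := by
  induction w using Quot.ind
  exact Polynomial.coeff_eq_zero_of_natDegree_lt
    (lt_of_lt_of_le (peirceAux_natDegree_lt _) h)

lemma peirce_coeff_zero (w : FreeCommMagma Unit) (h : 2 ≤ FreeCommMagma.count () w) :
    (FreeCommMagma.peirce K () w).coeff 0 = 0 := by
  induction w using Quot.ind with | _ w => ?_
  cases w with
  | of t =>
    have hc : FreeCommMagma.count () (Quot.mk (CommRel Unit) (FreeMagma.of t)) = 1 := by
      show countAux () (FreeMagma.of t) = 1
      simp [countAux]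
    omega
  | mul u v =>
    show (peirceAux K () (FreeMagma.mul u v)).coeff 0 = 0
    rw [show FreeMagma.mul u v = u * v from rfl, peirceAux_mul]
    simp [Polynomial.mul_coeff_zero]

end Trees

section Classify

def m2 : FreeCommMagma Unit := x1 * x1
def m3 : FreeCommMagma Unit := m2 * x1
def m4a : FreeCommMagma Unit := m3 * x1
def m4b : FreeCommMagma Unit := m2 * m2
def m5a : FreeCommMagma Unit := m4a * x1
def m5b : FreeCommMagma Unit := m4b * x1
def m5c : FreeCommMagma Unit := m3 * m2

@[simp] lemma count_m2 : FreeCommMagma.count () m2 = 2 := by simp [m2]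
@[simp] lemma count_m3 : FreeCommMagma.count () m3 = 3 := by simp [m3]
@[simp] lemma count_m4a : FreeCommMagma.count () m4a = 4 := by simp [m4a]
@[simp] lemma count_m4b : FreeCommMagma.count () m4b = 4 := by simp [m4b]
@[simp] lemma count_m5a : FreeCommMagma.count () m5a = 5 := by simp [m5a]
@[simp] lemma count_m5b : FreeCommMagma.count () m5b = 5 := by simp [m5b]
@[simp] lemma count_m5c : FreeCommMagma.count () m5c = 5 := by simp [m5c]

lemma classify (w : FreeCommMagma Unit) :
    (FreeCommMagma.count () w = 1 → w = x1) ∧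
    (FreeCommMagma.count () w = 2 → w = m2) ∧
    (FreeCommMagma.count () w = 3 → w = m3) ∧
    (FreeCommMagma.count () w = 4 → w = m4a ∨ w = m4b) ∧
    (FreeCommMagma.count () w = 5 → w = m5a ∨ w = m5b ∨ w = m5c) := by
  induction w using Quot.ind with | _ w => ?_
  induction w with
  | ih1 t =>
    have hc : FreeCommMagma.count () (Quot.mk (CommRel Unit) (FreeMagma.of t)) = 1 := by
      show countAux () (FreeMagma.of t) = 1
      simp [countAux]
    exact ⟨fun _ => rfl, fun h => by omega, fun h => by omega, fun h => by omega,
      fun h => by omega⟩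
  | ih2 u v ihu ihv =>
    obtain ⟨u1, u2, u3, u4, -⟩ := ihu
    obtain ⟨v1, v2, v3, v4, -⟩ := ihv
    have hu := countAux_pos u
    have hv := countAux_pos v
    refine ⟨?_, ?_, ?_, ?_, ?_⟩ <;> intro h <;>
      replace h : countAux () u + countAux () v = _ := h
    · exact absurd h (by omega)
    · have h1 : countAux () u = 1 := by omega
      have h2 : countAux () v = 1 := by omega
      show FreeCommMagma.mk u * FreeCommMagma.mk v = m2
      rw [show FreeCommMagma.mk u = x1 from u1 h1, show FreeCommMagma.mk v = x1 from v1 h2]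
      rfl
    · rcases (show countAux () u = 1 ∧ countAux () v = 2 ∨
          countAux () u = 2 ∧ countAux () v = 1 by omega) with ⟨h1, h2⟩ | ⟨h1, h2⟩
      · show FreeCommMagma.mk u * FreeCommMagma.mk v = m3
        rw [show FreeCommMagma.mk u = x1 from u1 h1,
          show FreeCommMagma.mk v = m2 from v2 h2, mul_comm]
        rfl
      · show FreeCommMagma.mk u * FreeCommMagma.mk v = m3
        rw [show FreeCommMagma.mk u = m2 from u2 h1, show FreeCommMagma.mk v = x1 from v1 h2]
        rfl
    · rcases (show countAux () u = 1 ∧ countAux () v = 3 ∨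
          countAux () u = 2 ∧ countAux () v = 2 ∨
          countAux () u = 3 ∧ countAux () v = 1 by omega) with
        ⟨h1, h2⟩ | ⟨h1, h2⟩ | ⟨h1, h2⟩
      · left
        show FreeCommMagma.mk u * FreeCommMagma.mk v = m4a
        rw [show FreeCommMagma.mk u = x1 from u1 h1,
          show FreeCommMagma.mk v = m3 from v3 h2, mul_comm]
        rfl
      · right
        show FreeCommMagma.mk u * FreeCommMagma.mk v = m4b
        rw [show FreeCommMagma.mk u = m2 from u2 h1, show FreeCommMagma.mk v = m2 from v2 h2]
        rfl
      · left
        show FreeCommMagma.mk u * FreeCommMagma.mk v = m4a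
        rw [show FreeCommMagma.mk u = m3 from u3 h1, show FreeCommMagma.mk v = x1 from v1 h2]
        rfl
    · rcases (show countAux () u = 1 ∧ countAux () v = 4 ∨
          countAux () u = 2 ∧ countAux () v = 3 ∨
          countAux () u = 3 ∧ countAux () v = 2 ∨
          countAux () u = 4 ∧ countAux () v = 1 by omega) with
        ⟨h1, h2⟩ | ⟨h1, h2⟩ | ⟨h1, h2⟩ | ⟨h1, h2⟩
      · rcases v4 h2 with hv4 | hv4
        · left
          show FreeCommMagma.mk u * FreeCommMagma.mk v = m5a
          rw [show FreeCommMagma.mk u = x1 from u1 h1,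
            show FreeCommMagma.mk v = m4a from hv4, mul_comm]
          rfl
        · right; left
          show FreeCommMagma.mk u * FreeCommMagma.mk v = m5b
          rw [show FreeCommMagma.mk u = x1 from u1 h1,
            show FreeCommMagma.mk v = m4b from hv4, mul_comm]
          rfl
      · right; right
        show FreeCommMagma.mk u * FreeCommMagma.mk v = m5c
        rw [show FreeCommMagma.mk u = m2 from u2 h1,
          show FreeCommMagma.mk v = m3 from v3 h2, mul_comm]
        rfl
      · right; right
        show FreeCommMagma.mk u * FreeCommMagma.mk v = m5c
        rw [show FreeCommMagma.mk u = m3 from u3 h1, show FreeCommMagma.mk v = m2 from v2 h2]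
        rfl
      · rcases u4 h1 with hu4 | hu4
        · left
          show FreeCommMagma.mk u * FreeCommMagma.mk v = m5a
          rw [show FreeCommMagma.mk u = m4a from hu4, show FreeCommMagma.mk v = x1 from v1 h2]
          rfl
        · right; left
          show FreeCommMagma.mk u * FreeCommMagma.mk v = m5b
          rw [show FreeCommMagma.mk u = m4b from hu4, show FreeCommMagma.mk v = x1 from v1 h2]
          rfl

lemma setEq2 : {w : FreeCommMagma Unit | FreeCommMagma.count () w = 2} = {m2} := by
  ext w
  simp only [Set.mem_setOf_eq, Set.mem_singleton_iff]
  exact ⟨(classify w).2.1, fun h => by subst h; simp⟩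

lemma setEq3 : {w : FreeCommMagma Unit | FreeCommMagma.count () w = 3} = {m3} := by
  ext w
  simp only [Set.mem_setOf_eq, Set.mem_singleton_iff]
  exact ⟨(classify w).2.2.1, fun h => by subst h; simp⟩

lemma setEq4 : {w : FreeCommMagma Unit | FreeCommMagma.count () w = 4} = {m4a, m4b} := by
  ext w
  simp only [Set.mem_setOf_eq, Set.mem_insert_iff, Set.mem_singleton_iff]
  exact ⟨(classify w).2.2.2.1, fun h => by rcases h with h | h <;> subst h <;> simp⟩

lemma setEq5 : {w : FreeCommMagma Unit | FreeCommMagma.count () w = 5} = {m5a, m5b, m5c} := by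
  ext w
  simp only [Set.mem_setOf_eq, Set.mem_insert_iff, Set.mem_singleton_iff]
  exact ⟨(classify w).2.2.2.2, fun h => by rcases h with h | h | h <;> subst h <;> simp⟩

end Classify
section PeirceVals

open Polynomial

variable {K : Type*} [Field K]

lemma peirce_m4a : FreeCommMagma.peirce K () m4a
    = Polynomial.C 2 * Polynomial.X ^ 3 + Polynomial.X ^ 2 + Polynomial.X := by
  simp only [m4a, m3, m2, peirce_mul, peirce_x1, map_ofNat]
  ring

lemma peirce_m4b : FreeCommMagma.peirce K () m4b = Polynomial.C 4 * Polynomial.X ^ 2 := by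
  simp only [m4b, m2, peirce_mul, peirce_x1, map_ofNat]
  ring

lemma peirce_m5a : FreeCommMagma.peirce K () m5a
    = Polynomial.C 2 * Polynomial.X ^ 4 + Polynomial.X ^ 3 + Polynomial.X ^ 2
      + Polynomial.X := by
  simp only [m5a, m4a, m3, m2, peirce_mul, peirce_x1, map_ofNat]
  ring

lemma peirce_m5b : FreeCommMagma.peirce K () m5b
    = Polynomial.C 4 * Polynomial.X ^ 3 + Polynomial.X := by
  simp only [m5b, m4b, m2, peirce_mul, peirce_x1, map_ofNat]
  ring

lemma peirce_m5c : FreeCommMagma.peirce K () m5c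
    = Polynomial.C 2 * Polynomial.X ^ 3 + Polynomial.C 3 * Polynomial.X ^ 2 := by
  simp only [m5c, m3, m2, peirce_mul, peirce_x1, map_ofNat]
  ring

end PeirceVals

section PartOne

open Polynomial

variable {K : Type*} [Field K] [CharZero K]

lemma part_one (n : ℕ) (h2 : 2 ≤ n) (h5 : n ≤ 5)
    (f : MonoidAlgebra K (FreeCommMagma Unit)) (hf : f ∈ homEvan K n) : f = 0 := by
  simp only [homEvan, Submodule.mem_inf, LinearMap.mem_ker] at hf
  obtain ⟨⟨hsp, haug⟩, hDp⟩ := hf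
  interval_cases n
  · rw [setEq2, Set.image_singleton, Submodule.mem_span_singleton] at hsp
    obtain ⟨a, rfl⟩ := hsp
    simp only [map_smul, aug_mono, smul_eq_mul, mul_one] at haug
    rw [haug, zero_smul]
  · rw [setEq3, Set.image_singleton, Submodule.mem_span_singleton] at hsp
    obtain ⟨a, rfl⟩ := hsp
    simp only [map_smul, aug_mono, smul_eq_mul, mul_one] at haug
    rw [haug, zero_smul]
  · rw [setEq4, Set.image_insert_eq, Set.image_singleton, Submodule.mem_span_pair] at hsp
    obtain ⟨a, b, rfl⟩ := hsp
    simp only [map_add, map_smul, aug_mono, smul_eq_mul, mul_one] at haug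
    simp only [map_add, map_smul, Dp_mono, peirce_m4a, peirce_m4b] at hDp
    have h1 := congrArg (fun p => Polynomial.coeff p 1) hDp
    simp only [Polynomial.coeff_add, Polynomial.coeff_smul, Polynomial.coeff_C_mul,
      Polynomial.coeff_X_pow, Polynomial.coeff_X, Polynomial.coeff_zero, smul_eq_mul] at h1
    norm_num at h1
    -- h1 : a = 0
    have hb : b = 0 := by simpa [h1] using haug
    rw [h1, hb, zero_smul, zero_smul, add_zero]
  · rw [setEq5, Set.image_insert_eq, Set.image_insert_eq, Set.image_singleton,
      Submodule.mem_span_insert] at hsp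
    obtain ⟨a, z, hz, rfl⟩ := hsp
    rw [Submodule.mem_span_pair] at hz
    obtain ⟨b, c, rfl⟩ := hz
    simp only [map_add, map_smul, aug_mono, smul_eq_mul, mul_one] at haug
    simp only [map_add, map_smul, Dp_mono, peirce_m5a, peirce_m5b, peirce_m5c] at hDp
    have h4 := congrArg (fun p => Polynomial.coeff p 4) hDp
    have hc2 := congrArg (fun p => Polynomial.coeff p 2) hDp
    simp only [Polynomial.coeff_add, Polynomial.coeff_smul, Polynomial.coeff_C_mul,
      Polynomial.coeff_X_pow, Polynomial.coeff_X, Polynomial.coeff_zero, smul_eq_mul] at h4 hc2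
    norm_num at h4 hc2
    -- h4 : a * 2 = 0 (or a = 0), hc2 : a + c * 3 = 0
    have ha : a = 0 := h4
    have hcc : c = 0 := by
      rw [ha, zero_add] at hc2
      have := mul_eq_zero.mp hc2
      simpa using this
    have hb : b = 0 := by simpa [ha, hcc] using haug
    rw [ha, hcc, hb, zero_smul, zero_smul, zero_smul, add_zero, add_zero]

end PartOne
section PartTwo

open Polynomial

variable {K : Type*} [Field K] [CharZero K]

set_option maxHeartbeats 1000000 in
set_option synthInstance.maxHeartbeats 200000 in
lemma part_two (n : ℕ) (hn : 6 ≤ n) :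
    (Wn n : ℤ) - n + 2 ≤ (Module.finrank K (homEvan K n) : ℤ) := by
  classical
  by_cases hfin : ({w : FreeCommMagma Unit | FreeCommMagma.count () w = n}).Finite
  case neg =>
    have hinf : Infinite {w : FreeCommMagma Unit // FreeCommMagma.count () w = n} :=
      Set.infinite_coe_iff.mpr hfin
    have hW : Wn n = 0 := by rw [Wn]; exact Nat.card_eq_zero_of_infinite
    rw [hW]
    have h0 : (0:ℤ) ≤ (Module.finrank K (homEvan K n) : ℤ) := Int.natCast_nonneg _
    omega
  case pos =>
  set S : Set (FreeCommMagma Unit) := {w : FreeCommMagma Unit | FreeCommMagma.count () w = n}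
    with hSdef
  haveI instS : Fintype S := hfin.fintype
  set V : Submodule K (MonoidAlgebra K (FreeCommMagma Unit)) :=
    Submodule.span K (mono K '' S) with hVdef
  -- linear independence of the degree-n monomials
  have hli : LinearIndependent K (fun w : S => mono K (w : FreeCommMagma Unit)) := by
    have h := (MonoidAlgebra.basis (FreeCommMagma Unit) K).linearIndependent
    have h2 := h.comp ((↑) : S → FreeCommMagma Unit) Subtype.val_injective
    exact h2
  have himg : mono K '' S = Set.range (fun w : S => mono K (w : FreeCommMagma Unit)) :=
    Set.image_eq_range _ _
  haveI : FiniteDimensional K V := FiniteDimensional.span_of_finite K (hfin.image _)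
  have hfr : Module.finrank K V = Fintype.card S := by
    rw [hVdef, himg]
    exact finrank_span_eq_card hli
  -- the coefficient-extraction linear map
  set L : MonoidAlgebra K (FreeCommMagma Unit) →ₗ[K] (Fin (n - 2) → K) :=
    LinearMap.pi (fun i => (Polynomial.lcoeff K ((i : ℕ) + 2)).comp (Dp K ())) with hLdef
  -- properties on the span
  have spanP : ∀ f ∈ V,
      Polynomial.eval (1:K) (Dp K () f) = (n : K) * aug K f ∧
      Polynomial.eval (2⁻¹:K) (Dp K () f) = aug K f ∧
      (Dp K () f).coeff 0 = 0 ∧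
      ∀ k, n ≤ k → (Dp K () f).coeff k = 0 := by
    intro f hf
    induction hf using Submodule.span_induction with
    | mem x hx =>
      obtain ⟨w, hw, rfl⟩ := hx
      have hw' : FreeCommMagma.count () w = n := hw
      refine ⟨?_, ?_, ?_, ?_⟩
      · rw [Dp_mono, aug_mono, peirce_eval_one, hw', mul_one]
      · rw [Dp_mono, aug_mono, peirce_eval_half]
      · rw [Dp_mono]; exact peirce_coeff_zero w (by omega)
      · intro k hk; rw [Dp_mono]; exact peirce_coeff_ge w (by omega)
    | zero => simp
    | add x y hx hy ihx ihy =>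
      obtain ⟨a1, a2, a3, a4⟩ := ihx
      obtain ⟨b1, b2, b3, b4⟩ := ihy
      refine ⟨?_, ?_, ?_, fun k hk => ?_⟩
      · simp only [map_add, Polynomial.eval_add, a1, b1]; ring
      · simp only [map_add, Polynomial.eval_add, a2, b2]
      · simp only [map_add, Polynomial.coeff_add, a3, b3, add_zero]
      · simp only [map_add, Polynomial.coeff_add, a4 k hk, b4 k hk, add_zero]
    | smul a x hx ihx =>
      obtain ⟨a1, a2, a3, a4⟩ := ihx
      refine ⟨?_, ?_, ?_, fun k hk => ?_⟩
      · simp only [map_smul, Polynomial.eval_smul, a1, smul_eq_mul, map_smul]; try ring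
      · simp only [map_smul, Polynomial.eval_smul, a2, smul_eq_mul]
      · simp only [map_smul, Polynomial.coeff_smul, a3, smul_zero]
      · simp only [map_smul, Polynomial.coeff_smul, a4 k hk, smul_zero]
  -- kernel elements of L in the span are evanescent
  have key : ∀ f ∈ V, L f = 0 → f ∈ homEvan K n := by
    intro f hf hLf
    obtain ⟨e1, e2, e0, ege⟩ := spanP f hf
    have hco : ∀ k, 2 ≤ k → k < n → (Dp K () f).coeff k = 0 := by
      intro k hk2 hk1
      have h := congrFun hLf ⟨k - 2, by omega⟩
      simpa [hLdef, LinearMap.pi_apply, Polynomial.lcoeff_apply,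
        show k - 2 + 2 = k by omega] using h
    have hX : Dp K () f = (Dp K () f).coeff 1 • Polynomial.X := by
      ext k
      rcases Nat.lt_or_ge k 2 with hk | hk
      · interval_cases k
        · rw [e0, Polynomial.coeff_smul, Polynomial.coeff_X_zero, smul_zero]
        · rw [Polynomial.coeff_smul, Polynomial.coeff_X_one, smul_eq_mul, mul_one]
      · rcases Nat.lt_or_ge k n with hkn | hkn
        · rw [hco k hk hkn, Polynomial.coeff_smul, Polynomial.coeff_X,
            if_neg (by omega), smul_zero]
        · rw [ege k hkn, Polynomial.coeff_smul, Polynomial.coeff_X,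
            if_neg (by omega), smul_zero]
    rw [hX] at e1 e2
    rw [Polynomial.eval_smul, Polynomial.eval_X, smul_eq_mul, mul_one] at e1
    rw [Polynomial.eval_smul, Polynomial.eval_X, smul_eq_mul] at e2
    set c := (Dp K () f).coeff 1 with hc
    -- e1 : c = n * aug f, e2 : c * 2⁻¹ = aug f
    have hcomb : c = (n : K) * (c * 2⁻¹) := by rw [e2, ← e1]
    have hc0 : c = 0 := by
      have h2 : ((n : K) - 2) * c = 0 := by
        field_simp at hcomb
        linear_combination -hcomb
      rcases mul_eq_zero.mp h2 with h | h
      · exfalso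
        have hne : (n : K) ≠ 2 := by
          exact_mod_cast (fun hh : (n:ℕ) = 2 => by omega : (n:ℕ) ≠ 2)
        apply hne
        linear_combination h
      · exact h
    have haug0 : aug K f = 0 := by rw [← e2, hc0, zero_mul]
    have hDp0 : Dp K () f = 0 := by rw [hX, hc0, zero_smul]
    simp only [homEvan, Submodule.mem_inf, LinearMap.mem_ker]
    exact ⟨⟨hf, haug0⟩, hDp0⟩
  -- rank computation
  set L' : V →ₗ[K] (Fin (n - 2) → K) := L.domRestrict V with hL'def
  have hrange : Module.finrank K (LinearMap.range L') ≤ n - 2 := by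
    calc Module.finrank K (LinearMap.range L') ≤ Module.finrank K (Fin (n - 2) → K) :=
          Submodule.finrank_le _
      _ = n - 2 := Module.finrank_fin_fun K
  have hrn := LinearMap.finrank_range_add_finrank_ker L'
  have hle : homEvan K n ≤ V := le_trans inf_le_left inf_le_left
  have hker_le : Module.finrank K (LinearMap.ker L')
      ≤ Module.finrank K (homEvan K n) := by
    have h1 : LinearMap.ker L' ≤ (homEvan K n).comap V.subtype := by
      intro y hy
      rw [LinearMap.mem_ker] at hy
      rw [Submodule.mem_comap]
      exact key y.1 y.2 hy
    calc Module.finrank K (LinearMap.ker L')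
        ≤ Module.finrank K ((homEvan K n).comap V.subtype) := Submodule.finrank_mono h1
      _ = Module.finrank K (homEvan K n) :=
          (Submodule.comapSubtypeEquivOfLe hle).finrank_eq
  have hWcard : Wn n = Fintype.card S := by
    rw [Wn]
    exact @Nat.card_eq_fintype_card _ instS
  rw [hWcard]
  have hfin2 : Fintype.card S ≤ (n - 2) + Module.finrank K (homEvan K n) := by omega
  omega

end PartTwo
end Evanescent

open Evanescent in
/-- Over a field of characteristic zero: (i) there is no homogeneous
Peirce-evanescent identity of type `[n]` for `2 ≤ n ≤ 5`; (ii) for `n ≥ 6` the space of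
homogeneous Peirce-evanescent identities of type `[n]` has dimension at least
`W_n − n + 2`. -/
theorem homogeneous_evanescent_univariate
    {K : Type*} [Field K] [CharZero K] :
    (∀ n : ℕ, 2 ≤ n → n ≤ 5 → ∀ f ∈ homEvan K n, f = 0) ∧
    (∀ n : ℕ, 6 ≤ n →
      (Wn n : ℤ) - n + 2 ≤ (Module.finrank K (homEvan K n) : ℤ)) := by
  exact ⟨fun n h2 h5 f hf => part_one n h2 h5 f hf, fun n hn => part_two n hn⟩
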